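/- Let H be a complex inner product space, let F and U be unitary operators on H, and let θ be a real number with F ∘ U = exp(iθ) · (U ∘ F). Suppose ψ ∈ H is a nonzero vector with Fψ = cψ for some complex number c, and suppose ⟪ψ, Uψ⟫ ≠ 0. Then exp(iθ) = 1. -/

import Mathlib

/-- Laughlin quantization on the torus: if unitaries `F`, `U` satisfy
`F ∘ U = exp(iθ)·(U ∘ F)`, `ψ ≠ 0` is an eigenvector of `F`, and the polarization
expectation value `⟪ψ, Uψ⟫` is nonzero, then `exp(iθ) = 1`. -/
theorem laughlin_quantization
    {H : Type*} [NormedAddCommGroup H] [InnerProductSpace ℂ H]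
    (F U : H ≃ₗᵢ[ℂ] H) (θ : ℝ)
    (hFU : ∀ x : H, F (U x) = Complex.exp (Complex.I * (θ : ℂ)) • U (F x))
    (ψ : H) (hψ : ψ ≠ 0) (c : ℂ) (hFψ : F ψ = c • ψ)
    (hz : (inner ℂ ψ (U ψ) : ℂ) ≠ 0) :
    Complex.exp (Complex.I * (θ : ℂ)) = 1 := by
  set e := Complex.exp (Complex.I * (θ : ℂ)) with he
  -- |c| = 1
  have hnorm : ‖c • ψ‖ = ‖ψ‖ := by rw [← hFψ]; exact F.norm_map ψ
  have hc : ‖c‖ = 1 := by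
    rw [norm_smul] at hnorm
    have hψn : ‖ψ‖ ≠ 0 := norm_ne_zero_iff.mpr hψ
    field_simp at hnorm
    exact hnorm
  have key : (inner ℂ ψ (U ψ) : ℂ) = (starRingEnd ℂ c) * c * e * inner ℂ ψ (U ψ) := by
    calc (inner ℂ ψ (U ψ) : ℂ) = inner ℂ (F ψ) (F (U ψ)) := (F.inner_map_map ψ (U ψ)).symm
    _ = inner ℂ (c • ψ) (e • U (c • ψ)) := by rw [hFU, hFψ]
    _ = (starRingEnd ℂ c) * (e * (c * inner ℂ ψ (U ψ))) := by
        rw [map_smul, inner_smul_left, inner_smul_right, inner_smul_right]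
    _ = (starRingEnd ℂ c) * c * e * inner ℂ ψ (U ψ) := by ring
  have hcc : (starRingEnd ℂ c) * c = 1 := by
    have := Complex.normSq_eq_conj_mul_self (z := c)
    rw [← this, Complex.normSq_eq_norm_sq, hc]
    norm_num
  rw [hcc, one_mul] at key
  have : (e - 1) * inner ℂ ψ (U ψ) = 0 := by linear_combination -key
  rcases mul_eq_zero.mp this with h | h
  · exact sub_eq_zero.mp h
  · exact absurd h hz
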